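/- The generalized Stieltjes transform of a stretched exponential is a Tricomi U function: S_{δ,μ,α/μ}{e^{-a^μ t^μ}; y} = ∫₀^∞ t^{δ-1}(y^μ + t^μ)^{-α/μ} e^{-a^μ t^μ} dt = (a^{α-δ}/μ) Γ(δ/μ) U(α/μ; 1 + α/μ − δ/μ; a^μ y^μ), where U(a;c;z) = (1/Γ(a)) ∫₀^∞ e^{-zu} u^{a-1}(1+u)^{c-a-1} du. -/

import Mathlib

open MeasureTheory Set

noncomputable def tricomiU (a c z : ℝ) : ℝ :=
  (1 / Real.Gamma a) * ∫ u in Set.Ioi (0:ℝ), Real.exp (-(z * u)) * u ^ (a - 1) * (1 + u) ^ (c - a - 1)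

namespace GenStieltjesAux

open Real

lemma gamma_scaled {P c : ℝ} (hP : 0 < P) (hc : 0 < c) :
    ∫ u in Ioi (0:ℝ), u ^ (P - 1) * Real.exp (-(c * u)) = c ^ (-P) * Real.Gamma P := by
  have := integral_rpow_mul_exp_neg_mul_rpow (p := 1) (q := P - 1) (b := c)
    one_pos (by linarith) hc
  simp only [rpow_one, sub_add_cancel, div_one, one_mul, mul_one, neg_mul] at this
  rw [← this]

lemma integ_aux {P c r : ℝ} (hP : 0 < P) (hc : 0 < c) (hr : r ≤ 0) :
    IntegrableOn (fun u : ℝ => u ^ (P - 1) * (1 + u) ^ r * Real.exp (-(c * u))) (Ioi 0) := by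
  have hbig : IntegrableOn (fun u : ℝ => u ^ (P - 1) * Real.exp (-c * u)) (Ioi 0) := by
    have := integrableOn_rpow_mul_exp_neg_mul_rpow (p := 1) (s := P - 1) (b := c)
      (by linarith) one_pos hc
    simpa [rpow_one] using this
  refine Integrable.mono hbig ?_ ?_
  · exact Measurable.aestronglyMeasurable (by fun_prop)
  · filter_upwards [ae_restrict_mem measurableSet_Ioi] with u hu
    have hu0 : 0 < u := hu
    rw [Real.norm_eq_abs, Real.norm_eq_abs, abs_of_nonneg (by positivity),
      abs_of_nonneg (by positivity)]
    have h1 : (1 + u) ^ r ≤ 1 := Real.rpow_le_one_of_one_le_of_nonpos (by linarith) hr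
    have h2 : u ^ (P - 1) * (1 + u) ^ r ≤ u ^ (P - 1) * 1 :=
      mul_le_mul_of_nonneg_left h1 (by positivity)
    calc u ^ (P - 1) * (1 + u) ^ r * Real.exp (-(c * u))
        ≤ u ^ (P - 1) * 1 * Real.exp (-(c * u)) :=
          mul_le_mul_of_nonneg_right h2 (by positivity)
      _ = u ^ (P - 1) * Real.exp (-c * u) := by rw [mul_one, neg_mul]

lemma kummer {p q z : ℝ} (hp : 0 < p) (hq : 0 < q) (hz : 0 < z) :
    Real.Gamma q * ∫ u in Ioi (0:ℝ), u ^ (p-1) * (1+u) ^ (-q) * Real.exp (-(z*u))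
      = Real.Gamma p * ∫ s in Ioi (0:ℝ), s ^ (q-1) * (z+s) ^ (-p) * Real.exp (-s) := by
  set F : ℝ → ℝ → ℝ := fun u s =>
    u ^ (p-1) * Real.exp (-(z*u)) * (s ^ (q-1) * Real.exp (-((1+u)*s))) with hF
  have hmeas : AEStronglyMeasurable (Function.uncurry F)
      (((volume : Measure ℝ).restrict (Ioi 0)).prod ((volume : Measure ℝ).restrict (Ioi 0))) := by
    apply Measurable.aestronglyMeasurable
    unfold Function.uncurry
    fun_prop
  have hinner : ∀ u : ℝ, 0 < u → ∫ s in Ioi (0:ℝ), F u s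
      = u ^ (p-1) * Real.exp (-(z*u)) * ((1+u) ^ (-q) * Real.Gamma q) := by
    intro u hu
    rw [hF]
    simp only
    rw [MeasureTheory.integral_const_mul, gamma_scaled hq (by linarith)]
  have hslice : ∀ u : ℝ, 0 < u → Integrable (F u) ((volume : Measure ℝ).restrict (Ioi 0)) := by
    intro u hu
    have : IntegrableOn (fun s : ℝ => s ^ (q-1) * Real.exp (-((1+u)*s))) (Ioi 0) := by
      have := integrableOn_rpow_mul_exp_neg_mul_rpow (p := 1) (s := q - 1) (b := 1+u)
        (by linarith) one_pos (by linarith)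
      refine this.congr_fun (fun x _ => by simp only [rpow_one, neg_mul]) measurableSet_Ioi
    exact (this.const_mul _)
  have hInt : Integrable (Function.uncurry F)
      (((volume : Measure ℝ).restrict (Ioi 0)).prod ((volume : Measure ℝ).restrict (Ioi 0))) := by
    rw [integrable_prod_iff hmeas]
    constructor
    · filter_upwards [ae_restrict_mem measurableSet_Ioi] with u hu
      exact hslice u hu
    · have key : IntegrableOn
          (fun u : ℝ => Real.Gamma q * (u ^ (p-1) * (1+u) ^ (-q) * Real.exp (-(z*u)))) (Ioi 0) :=
        (integ_aux hp hz (by linarith : -q ≤ 0)).const_mul _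
      refine key.congr_fun (fun u hu => ?_) measurableSet_Ioi
      have hu : (0:ℝ) < u := hu
      have h1 : ∀ᵐ s ∂((volume : Measure ℝ).restrict (Ioi 0)), ‖F u s‖ = F u s := by
        filter_upwards [ae_restrict_mem measurableSet_Ioi] with s hs
        have hs : (0:ℝ) < s := hs
        rw [Real.norm_eq_abs, abs_of_nonneg (by positivity)]
      simp only [Function.uncurry_apply_pair]
      rw [integral_congr_ae h1, hinner u hu]
      ring
  have hswap := MeasureTheory.integral_integral_swap hInt
  have hL : (∫ u in Ioi (0:ℝ), ∫ s in Ioi (0:ℝ), F u s)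
      = Real.Gamma q * ∫ u in Ioi (0:ℝ), u ^ (p-1) * (1+u) ^ (-q) * Real.exp (-(z*u)) := by
    rw [← MeasureTheory.integral_const_mul]
    refine setIntegral_congr_fun measurableSet_Ioi (fun u hu => ?_)
    rw [hinner u hu]; ring
  have hR : (∫ s in Ioi (0:ℝ), ∫ u in Ioi (0:ℝ), F u s)
      = Real.Gamma p * ∫ s in Ioi (0:ℝ), s ^ (q-1) * (z+s) ^ (-p) * Real.exp (-s) := by
    rw [← MeasureTheory.integral_const_mul]
    refine setIntegral_congr_fun measurableSet_Ioi (fun s hs => ?_)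
    have hs : (0:ℝ) < s := hs
    have hinner2 : (∫ u in Ioi (0:ℝ), F u s)
        = s ^ (q-1) * Real.exp (-s) * ((z+s) ^ (-p) * Real.Gamma p) := by
      have hcong : ∀ u : ℝ, F u s
          = s ^ (q-1) * Real.exp (-s) * (u ^ (p-1) * Real.exp (-((z+s)*u))) := by
        intro u
        have he : Real.exp (-(z*u)) * Real.exp (-((1+u)*s))
            = Real.exp (-s) * Real.exp (-((z+s)*u)) := by
          rw [← Real.exp_add, ← Real.exp_add]; congr 1; ring
        calc F u s = s ^ (q-1) * u ^ (p-1) * (Real.exp (-(z*u)) * Real.exp (-((1+u)*s))) := by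
              rw [hF]; ring
          _ = _ := by rw [he]; ring
      simp_rw [hcong]
      rw [MeasureTheory.integral_const_mul, gamma_scaled hp (by linarith)]
    rw [hinner2]; ring
  rw [← hL, ← hR, hswap]

lemma jscale {p q z : ℝ} (hz : 0 < z) :
    ∫ s in Ioi (0:ℝ), s ^ (q-1) * (z+s) ^ (-p) * Real.exp (-s)
      = z ^ (q-p) * ∫ v in Ioi (0:ℝ), v ^ (q-1) * (1+v) ^ (-p) * Real.exp (-(z*v)) := by
  have hsub := integral_comp_mul_left_Ioi
    (fun s : ℝ => s ^ (q-1) * (z+s) ^ (-p) * Real.exp (-s)) 0 hz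
  rw [mul_zero] at hsub
  have e1 : (∫ s in Ioi (0:ℝ), s ^ (q-1) * (z+s) ^ (-p) * Real.exp (-s))
      = z * ∫ v in Ioi (0:ℝ), (z*v) ^ (q-1) * (z+z*v) ^ (-p) * Real.exp (-(z*v)) := by
    rw [hsub, smul_eq_mul, ← mul_assoc, mul_inv_cancel₀ hz.ne', one_mul]
  rw [e1, ← MeasureTheory.integral_const_mul, ← MeasureTheory.integral_const_mul]
  refine setIntegral_congr_fun measurableSet_Ioi (fun v hv => ?_)
  have hv : (0:ℝ) < v := hv
  have h1 : (z*v) ^ (q-1) = z ^ (q-1) * v ^ (q-1) := Real.mul_rpow hz.le hv.le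
  have h2 : (z + z*v) ^ (-p) = z ^ (-p) * (1+v) ^ (-p) := by
    rw [show z + z*v = z * (1+v) by ring, Real.mul_rpow hz.le (by linarith)]
  have h3 : z ^ (q-p) = z * (z ^ (q-1) * z ^ (-p)) := by
    rw [← Real.rpow_add hz, show q - p = 1 + (q - 1 + -p) by ring,
      Real.rpow_add hz, Real.rpow_one]
  rw [h1, h2, h3]
  ring
end GenStieltjesAux

open GenStieltjesAux Real in
theorem gen_stieltjes_of_exp (α δ μ a y : ℝ) (hμ : 0 < μ) (ha : 0 < a) (hy : 0 < y)
    (hδ : 0 < δ / μ) (hα : 0 < α / μ) (h : -1 < α / μ - δ / μ) :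
    ∫ t in Ioi (0:ℝ), t ^ (δ - 1) * (y ^ μ + t ^ μ) ^ (-(α / μ)) * Real.exp (-(a ^ μ * t ^ μ))
      = (a ^ (α - δ) / μ) * Real.Gamma (δ / μ) *
        tricomiU (α / μ) (1 + α / μ - δ / μ) (a ^ μ * y ^ μ) := by
  have hμ0 : μ ≠ 0 := hμ.ne'
  have hap : (0:ℝ) < a ^ μ := rpow_pos_of_pos ha μ
  have hyp : (0:ℝ) < y ^ μ := rpow_pos_of_pos hy μ
  have hz : (0:ℝ) < a ^ μ * y ^ μ := mul_pos hap hyp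
  set p : ℝ := δ / μ with hpdef
  set q : ℝ := α / μ with hqdef
  set z : ℝ := a ^ μ * y ^ μ with hzdef
  have hGq : Real.Gamma q ≠ 0 := (Real.Gamma_pos_of_pos hα).ne'
  -- Step A : substitution t ↦ t ^ μ
  have stepA : (∫ t in Ioi (0:ℝ),
        t ^ (δ - 1) * (y ^ μ + t ^ μ) ^ (-q) * Real.exp (-(a ^ μ * t ^ μ)))
      = (1/μ) * ∫ s in Ioi (0:ℝ), s ^ (p - 1) * (y ^ μ + s) ^ (-q) * Real.exp (-(a ^ μ * s)) := by
    rw [← MeasureTheory.integral_const_mul,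
      ← integral_comp_rpow_Ioi_of_pos
        (g := fun s => (1/μ) * (s ^ (p - 1) * (y ^ μ + s) ^ (-q) * Real.exp (-(a ^ μ * s)))) hμ]
    refine setIntegral_congr_fun measurableSet_Ioi (fun t ht => ?_)
    have ht : (0:ℝ) < t := ht
    have h1 : (t ^ μ) ^ (p - 1) = t ^ (δ - μ) := by
      rw [← Real.rpow_mul ht.le]
      congr 1
      rw [hpdef]; field_simp
    have h2 : t ^ (μ - 1) * t ^ (δ - μ) = t ^ (δ - 1) := by
      rw [← Real.rpow_add ht]; congr 1; ring
    rw [smul_eq_mul, h1, ← h2]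
    field_simp
  -- Step B : scaling s ↦ y ^ μ * s
  have stepB : (∫ s in Ioi (0:ℝ), s ^ (p - 1) * (y ^ μ + s) ^ (-q) * Real.exp (-(a ^ μ * s)))
      = y ^ (δ - α) *
        ∫ u in Ioi (0:ℝ), u ^ (p - 1) * (1 + u) ^ (-q) * Real.exp (-(z * u)) := by
    have hsub := integral_comp_mul_left_Ioi
      (fun s : ℝ => s ^ (p - 1) * (y ^ μ + s) ^ (-q) * Real.exp (-(a ^ μ * s))) 0 hyp
    rw [mul_zero] at hsub
    have e1 : (∫ s in Ioi (0:ℝ), s ^ (p - 1) * (y ^ μ + s) ^ (-q) * Real.exp (-(a ^ μ * s)))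
        = y ^ μ * ∫ u in Ioi (0:ℝ), (y ^ μ * u) ^ (p - 1) * (y ^ μ + y ^ μ * u) ^ (-q) *
            Real.exp (-(a ^ μ * (y ^ μ * u))) := by
      rw [hsub, smul_eq_mul, ← mul_assoc, mul_inv_cancel₀ hyp.ne', one_mul]
    rw [e1, ← MeasureTheory.integral_const_mul, ← MeasureTheory.integral_const_mul]
    refine setIntegral_congr_fun measurableSet_Ioi (fun u hu => ?_)
    have hu : (0:ℝ) < u := hu
    have h1 : (y ^ μ * u) ^ (p - 1) = (y ^ μ) ^ (p - 1) * u ^ (p - 1) :=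
      Real.mul_rpow hyp.le hu.le
    have h2 : (y ^ μ + y ^ μ * u) ^ (-q) = (y ^ μ) ^ (-q) * (1 + u) ^ (-q) := by
      rw [show y ^ μ + y ^ μ * u = y ^ μ * (1 + u) by ring,
        Real.mul_rpow hyp.le (by linarith)]
    have h3 : -(a ^ μ * (y ^ μ * u)) = -(z * u) := by rw [hzdef]; ring
    have h4 : y ^ μ * ((y ^ μ) ^ (p - 1) * (y ^ μ) ^ (-q)) = y ^ (δ - α) := by
      rw [← Real.rpow_mul hy.le, ← Real.rpow_mul hy.le, ← Real.rpow_add hy,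
        ← Real.rpow_add hy]
      congr 1
      rw [hpdef, hqdef]; field_simp; ring
    rw [h1, h2, h3, ← h4]
    ring
  -- the tricomiU integrand in normal form
  have stepC : tricomiU q (1 + q - p) z
      = (1 / Real.Gamma q) *
        ∫ v in Ioi (0:ℝ), v ^ (q - 1) * (1 + v) ^ (-p) * Real.exp (-(z * v)) := by
    rw [tricomiU]
    congr 1
    refine setIntegral_congr_fun measurableSet_Ioi (fun v hv => ?_)
    rw [show 1 + q - p - q - 1 = -p by ring]
    ring
  -- Kummer + scaling
  have key : Real.Gamma q *
        ∫ u in Ioi (0:ℝ), u ^ (p - 1) * (1 + u) ^ (-q) * Real.exp (-(z * u))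
      = Real.Gamma p * (z ^ (q - p) *
        ∫ v in Ioi (0:ℝ), v ^ (q - 1) * (1 + v) ^ (-p) * Real.exp (-(z * v))) := by
    rw [kummer hδ hα hz, jscale hz]
  have hzpow : z ^ (q - p) = a ^ (α - δ) * y ^ (α - δ) := by
    rw [hzdef, Real.mul_rpow hap.le hyp.le, ← Real.rpow_mul ha.le, ← Real.rpow_mul hy.le]
    congr 1 <;> · congr 1; rw [hpdef, hqdef]; field_simp
  have hycancel : y ^ (δ - α) * y ^ (α - δ) = 1 := by
    rw [← Real.rpow_add hy, show δ - α + (α - δ) = 0 by ring, Real.rpow_zero]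
  rw [stepA, stepB, stepC]
  set I := ∫ u in Ioi (0:ℝ), u ^ (p - 1) * (1 + u) ^ (-q) * Real.exp (-(z * u))
  set J := ∫ v in Ioi (0:ℝ), v ^ (q - 1) * (1 + v) ^ (-p) * Real.exp (-(z * v))
  rw [hzpow] at key
  field_simp
  linear_combination (y ^ (δ - α)) * key +
    (Real.Gamma p * J * a ^ (α - δ)) * hycancel
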